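/- Let (w_n)_{n≥1} be positive reals with ∑_{n≥1} w_n = 1 and let (a_n)_{n≥1} be a sequence of reals. For each k set b_k := inf_{n≠k} |a_k - a_n - 1|, and assume that w_k·b_k³ → ∞ as k → ∞. Then ∑_{n≥1} w_n·|a_n|³ = ∞ (the series diverges); that is, the measure μ = ∑_{n≥1} w_n·δ_{a_n} has infinite absolute third moment. -/
import Mathlib


open MeasureTheory Real Set Filter Topology

theorem third_moment_infinite_of_fast_growth
    (w a b : ℕ → ℝ) (hw : ∀ n, 0 < w n) (hsum : ∑' n, w n = 1)
    (hb : ∀ k, b k = sInf {r : ℝ | ∃ n, n ≠ k ∧ r = |a k - a n - 1|})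
    (hbtop : Tendsto (fun k => w k * b k ^ 3) atTop atTop) :
    ¬ Summable (fun n => w n * |a n| ^ 3) := by
  intro hS
  have hwsum : Summable w := by
    by_contra h
    rw [tsum_eq_zero_of_not_summable h] at hsum
    norm_num at hsum
  have hw0 : Tendsto w atTop (𝓝 0) := hwsum.tendsto_atTop_zero
  have ha0 : Tendsto (fun n => w n * |a n| ^ 3) atTop (𝓝 0) := hS.tendsto_atTop_zero
  set C : ℝ := |a 0| + 1 with hC
  have hC0 : (0:ℝ) ≤ C := by positivity
  have key : ∀ k, 1 ≤ k → w k * b k ^ 3 ≤ 8 * (w k * |a k| ^ 3) + (8 * C ^ 3) * w k := by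
    intro k hk
    have hne : (0 : ℕ) ≠ k := by omega
    have hmem : |a k - a 0 - 1| ∈ {r : ℝ | ∃ n, n ≠ k ∧ r = |a k - a n - 1|} :=
      ⟨0, hne, rfl⟩
    have hbdd : BddBelow {r : ℝ | ∃ n, n ≠ k ∧ r = |a k - a n - 1|} := by
      refine ⟨0, fun r hr => ?_⟩
      obtain ⟨n, _, rfl⟩ := hr
      exact abs_nonneg _
    have hble : b k ≤ |a k - a 0 - 1| := by rw [hb]; exact csInf_le hbdd hmem
    have hb0 : (0:ℝ) ≤ b k := by
      rw [hb]
      refine le_csInf ⟨_, hmem⟩ (fun r hr => ?_)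
      obtain ⟨n, _, rfl⟩ := hr
      exact abs_nonneg _
    have t1 : |a k - a 0 - 1| ≤ |a k - a 0| + 1 := by
      have := abs_sub (a k - a 0) (1:ℝ)
      simpa using this
    have t2 : |a k - a 0| ≤ |a k| + |a 0| := abs_sub _ _
    have h1 : b k ≤ |a k| + C := by
      rw [hC]; linarith
    have hcube : b k ^ 3 ≤ 8 * (|a k| ^ 3 + C ^ 3) := by
      have ha : (0:ℝ) ≤ |a k| := abs_nonneg _
      nlinarith [pow_le_pow_left₀ hb0 h1 3, sq_nonneg (|a k| - C), sq_nonneg (|a k| + C),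
        mul_nonneg ha hC0]
    have hwk := (hw k).le
    nlinarith [mul_le_mul_of_nonneg_left hcube hwk]
  have hg : Tendsto (fun k => 8 * (w k * |a k| ^ 3) + (8 * C ^ 3) * w k) atTop (𝓝 0) := by
    have := (ha0.const_mul 8).add (hw0.const_mul (8 * C ^ 3))
    simpa using this
  have h1 : ∀ᶠ k in atTop, (1:ℝ) ≤ w k * b k ^ 3 := hbtop.eventually_ge_atTop 1
  have h2 : ∀ᶠ k in atTop, 8 * (w k * |a k| ^ 3) + (8 * C ^ 3) * w k < 1 :=
    hg.eventually (gt_mem_nhds one_pos)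
  have h3 : ∀ᶠ k in atTop, 1 ≤ k := eventually_ge_atTop 1
  obtain ⟨k, hk1, hk2, hk3⟩ := (h1.and (h2.and h3)).exists
  have := key k hk3
  linarith
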